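/- Let G = (V,E) be a finite simple graph, k ≥ 1 an integer, and S ⊆ V with |S| ≤ 4k such that every connected component of G − S is a clique or a tree. Let v be a large-dense vertex of G with v ∉ S that lies in a connected component of G − S which is a tree. Then every feasible solution for (G,k) contains v. -/

import Mathlib

open SimpleGraph

/-- The number of edges of `G` with both endpoints in the neighborhood of `v`. -/
noncomputable def rho {V : Type*} (G : SimpleGraph V) (v : V) : ℕ :=
  {e : Sym2 V | e ∈ G.edgeSet ∧ ∀ x ∈ e, G.Adj v x}.ncard

/-- `v` is large-sparse: `|N(v)| > 7k` and `ρ(v) ≤ |N(v)|(|N(v)|−1)/4`. -/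
def LargeSparse {V : Type*} (G : SimpleGraph V) (k : ℕ) (v : V) : Prop :=
  7 * k < (G.neighborSet v).ncard ∧
    4 * rho G v ≤ (G.neighborSet v).ncard * ((G.neighborSet v).ncard - 1)

/-- `v` is large-dense: `|N(v)| > 7k` and `ρ(v) > |N(v)|(|N(v)|−1)/4`. -/
def LargeDense {V : Type*} (G : SimpleGraph V) (k : ℕ) (v : V) : Prop :=
  7 * k < (G.neighborSet v).ncard ∧
    (G.neighborSet v).ncard * ((G.neighborSet v).ncard - 1) < 4 * rho G v

/-- The connected component `c` of `H` is a clique. -/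
def CompIsClique {W : Type*} (H : SimpleGraph W) (c : H.ConnectedComponent) : Prop :=
  H.IsClique c.supp

/-- The connected component `c` of `H` is a tree. -/
def CompIsTree {W : Type*} (H : SimpleGraph W) (c : H.ConnectedComponent) : Prop :=
  (H.induce c.supp).IsTree

/-- Every connected component of `H` is a clique or a tree. -/
def CliquesOrTrees {W : Type*} (H : SimpleGraph W) : Prop :=
  ∀ c : H.ConnectedComponent, CompIsClique H c ∨ CompIsTree H c

/-- `X` is a feasible solution for `(G, k)`: `|X| ≤ k` and every connected component of
`G − X` is a clique or a tree. -/
def IsFeasible {V : Type*} (G : SimpleGraph V) (k : ℕ) (X : Set V) : Prop :=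
  X.ncard ≤ k ∧ CliquesOrTrees (G.induce (Xᶜ : Set V))

/-- An acyclic graph contains no triangle. -/
lemma acyclic_no_triangle {W : Type*} {H : SimpleGraph W} (hH : H.IsAcyclic)
    {x y z : W} (hxy : H.Adj x y) (hyz : H.Adj y z) (hxz : H.Adj x z) : False := by
  have hb := (SimpleGraph.isAcyclic_iff_forall_adj_isBridge.mp hH) hyz
  rw [SimpleGraph.isBridge_iff] at hb
  apply hb
  have h1 : (H \ fromEdgeSet {s(y, z)}).Adj y x := by
    rw [SimpleGraph.sdiff_adj, SimpleGraph.fromEdgeSet_adj]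
    refine ⟨hxy.symm, ?_⟩
    rintro ⟨hmem, -⟩
    rw [Set.mem_singleton_iff, Sym2.eq_iff] at hmem
    rcases hmem with ⟨-, h⟩ | ⟨h, -⟩
    · exact hxz.ne h
    · exact hyz.ne h
  have h2 : (H \ fromEdgeSet {s(y, z)}).Adj x z := by
    rw [SimpleGraph.sdiff_adj, SimpleGraph.fromEdgeSet_adj]
    refine ⟨hxz, ?_⟩
    rintro ⟨hmem, -⟩
    rw [Set.mem_singleton_iff, Sym2.eq_iff] at hmem
    rcases hmem with ⟨h, -⟩ | ⟨-, h⟩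
    · exact hxy.ne h
    · exact hyz.ne h.symm
  exact h1.reachable.trans h2.reachable

/-- No triangle can touch a tree component. -/
lemma tree_comp_no_triangle {W : Type*} {H : SimpleGraph W} {c : H.ConnectedComponent}
    (ht : (H.induce c.supp).IsTree) {x y z : W} (hx : x ∈ c.supp)
    (hxy : H.Adj x y) (hyz : H.Adj y z) (hxz : H.Adj x z) : False := by
  rw [SimpleGraph.ConnectedComponent.mem_supp_iff] at hx
  have hy : y ∈ c.supp := by
    rw [SimpleGraph.ConnectedComponent.mem_supp_iff, ← hx]
    exact SimpleGraph.ConnectedComponent.sound hxy.symm.reachable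
  have hz : z ∈ c.supp := by
    rw [SimpleGraph.ConnectedComponent.mem_supp_iff, ← hx]
    exact SimpleGraph.ConnectedComponent.sound hxz.symm.reachable
  have hx' : x ∈ c.supp := by rw [SimpleGraph.ConnectedComponent.mem_supp_iff]; exact hx
  exact acyclic_no_triangle ht.IsAcyclic
    (x := (⟨x, hx'⟩ : c.supp)) (y := ⟨y, hy⟩) (z := ⟨z, hz⟩) hxy hyz hxz

lemma ncard_prod' {α β : Type*} (s : Set α) (t : Set β) (hs : s.Finite) (ht : t.Finite) :
    (s ×ˢ t).ncard = s.ncard * t.ncard := by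
  rw [Set.ncard_eq_toFinset_card _ (hs.prod ht), Set.ncard_eq_toFinset_card _ hs,
    Set.ncard_eq_toFinset_card _ ht, ← Finset.card_product]
  congr 1
  ext p
  simp [Set.Finite.mem_toFinset]

/-- If there are many edges inside `N(v)`, some edge avoids `X`. -/
lemma exists_edge_avoiding {V : Type*} [Fintype V] (G : SimpleGraph V) (v : V) (X : Set V)
    (h : (X ∩ G.neighborSet v).ncard * (G.neighborSet v).ncard < rho G v) :
    ∃ a b : V, G.Adj a b ∧ G.Adj v a ∧ G.Adj v b ∧ a ∉ X ∧ b ∉ X := by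
  by_contra hcon
  push_neg at hcon
  set E₀ : Set (Sym2 V) := {e : Sym2 V | e ∈ G.edgeSet ∧ ∀ x ∈ e, G.Adj v x} with hE₀
  have hall : ∀ e ∈ E₀, ∃ x, x ∈ X ∧ x ∈ e := by
    intro e he
    induction e with
    | _ a b =>
      obtain ⟨hab, hmem⟩ := he
      rw [SimpleGraph.mem_edgeSet] at hab
      have hva := hmem a (Sym2.mem_mk_left a b)
      have hvb := hmem b (Sym2.mem_mk_right a b)
      by_cases haX : a ∈ X
      · exact ⟨a, haX, Sym2.mem_mk_left a b⟩
      · exact ⟨b, hcon a b hab hva hvb haX, Sym2.mem_mk_right a b⟩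
  classical
  set f : Sym2 V → V × V := fun e =>
    if h : ∃ x, x ∈ X ∧ x ∈ e then (h.choose, Sym2.Mem.other h.choose_spec.2) else (v, v) with hf
  have key : ∀ e ∈ E₀, f e ∈ ((X ∩ G.neighborSet v) ×ˢ (G.neighborSet v)) ∧
      s(((f e).1), ((f e).2)) = e := by
    intro e he
    have h := hall e he
    have hfe : f e = (h.choose, Sym2.Mem.other h.choose_spec.2) := dif_pos h
    obtain ⟨hx, hxe⟩ := h.choose_spec
    have hother : Sym2.Mem.other h.choose_spec.2 ∈ e := Sym2.other_mem _
    have hspec : s(h.choose, Sym2.Mem.other h.choose_spec.2) = e := Sym2.other_spec _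
    refine ⟨?_, by rw [hfe]; exact hspec⟩
    rw [hfe]
    exact ⟨⟨hx, he.2 _ hxe⟩, he.2 _ hother⟩
  have hinj : Set.InjOn f E₀ := by
    intro e₁ he₁ e₂ he₂ heq
    have k₁ := (key e₁ he₁).2
    have k₂ := (key e₂ he₂).2
    rw [← k₁, ← k₂, heq]
  have hle : E₀.ncard ≤ ((X ∩ G.neighborSet v) ×ˢ (G.neighborSet v)).ncard :=
    Set.ncard_le_ncard_of_injOn f (fun e he => (key e he).1) hinj (Set.toFinite _)
  rw [ncard_prod' _ _ (Set.toFinite _) (Set.toFinite _)] at hle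
  have : rho G v = E₀.ncard := rfl
  omega

/-- let `S ⊆ V` with `|S| ≤ 4k` be such that every connected component of
`G − S` is a clique or a tree, and let `v` be a large-dense vertex with `v ∉ S` lying in
a tree component of `G − S`. Then every feasible solution for `(G,k)` contains `v`. -/
theorem stmt_7 {V : Type*} [Fintype V] (G : SimpleGraph V) (k : ℕ) (hk : 1 ≤ k)
    (S : Set V) (hScard : S.ncard ≤ 4 * k)
    (hS : CliquesOrTrees (G.induce (Sᶜ : Set V)))
    (v : V) (hv : LargeDense G k v) (hvS : v ∉ S)
    (hvtree : CompIsTree (G.induce (Sᶜ : Set V))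
      ((G.induce (Sᶜ : Set V)).connectedComponentMk ⟨v, hvS⟩))
    (X : Set V) (hX : IsFeasible G k X) :
    v ∈ X := by
  by_contra hvX
  obtain ⟨hn7, hdense⟩ := hv
  set N := G.neighborSet v with hN
  set n := N.ncard with hn
  obtain ⟨hXk, hXct⟩ := hX
  -- component of v in G - X
  set c' := (G.induce (Xᶜ : Set V)).connectedComponentMk ⟨v, hvX⟩ with hc'
  have hmemsupp : ∀ (a : V) (ha : a ∈ (Xᶜ : Set V)), G.Adj v a →
      (⟨a, ha⟩ : (Xᶜ : Set V)) ∈ c'.supp := by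
    intro a ha hadj
    rw [SimpleGraph.ConnectedComponent.mem_supp_iff]
    apply SimpleGraph.ConnectedComponent.sound
    exact SimpleGraph.Adj.reachable (by exact hadj.symm)
  rcases hXct c' with hclq | htree
  · -- clique case: find two distinct neighbors avoiding X ∪ S, get triangle in G - S
    have hdiff : 1 < (N \ (X ∪ S)).ncard := by
      have h1 := Set.ncard_le_ncard_diff_add_ncard N (X ∪ S) (Set.toFinite _)
      have h2 : (X ∪ S).ncard ≤ X.ncard + S.ncard := Set.ncard_union_le X S
      omega
    rw [Set.one_lt_ncard (Set.toFinite _)] at hdiff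
    obtain ⟨a, ha, b, hb, hab⟩ := hdiff
    obtain ⟨haN, haXS⟩ := ha
    obtain ⟨hbN, hbXS⟩ := hb
    have haX : a ∉ X := fun h => haXS (Or.inl h)
    have hbX : b ∉ X := fun h => hbXS (Or.inl h)
    have haS : a ∉ S := fun h => haXS (Or.inr h)
    have hbS : b ∉ S := fun h => hbXS (Or.inr h)
    have hva : G.Adj v a := haN
    have hvb : G.Adj v b := hbN
    -- a, b are in c'.supp, so adjacent by clique
    have hadjab : G.Adj a b := by
      have := hclq (hmemsupp a haX hva) (hmemsupp b hbX hvb)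
        (by simp [Subtype.ext_iff]; exact hab)
      exact this
    -- triangle v a b in G - S, contradiction with tree component
    exact tree_comp_no_triangle hvtree (x := (⟨v, hvS⟩ : (Sᶜ : Set V)))
      (y := ⟨a, haS⟩) (z := ⟨b, hbS⟩)
      (SimpleGraph.ConnectedComponent.mem_supp_iff _ _ |>.mpr rfl)
      hva hadjab hvb
  · -- tree case: find an edge inside N(v) avoiding X, triangle in G - X
    have hkey : (X ∩ N).ncard * n < rho G v := by
      have h1 : (X ∩ N).ncard ≤ X.ncard := Set.ncard_inter_le_ncard_left X N (Set.toFinite _)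
      have h2 : 4 * ((X ∩ N).ncard * n) ≤ 4 * (k * n) := by
        have : (X ∩ N).ncard ≤ k := le_trans h1 hXk
        nlinarith
      have h3 : 4 * (k * n) ≤ n * (n - 1) := by
        have hn1 : 4 * k ≤ n - 1 := by omega
        calc 4 * (k * n) = (4 * k) * n := by ring
          _ ≤ (n - 1) * n := Nat.mul_le_mul_right n hn1
          _ = n * (n - 1) := Nat.mul_comm _ _
      omega
    obtain ⟨a, b, hadjab, hva, hvb, haX, hbX⟩ := exists_edge_avoiding G v X hkey
    exact tree_comp_no_triangle htree (x := (⟨v, hvX⟩ : (Xᶜ : Set V)))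
      (y := ⟨a, haX⟩) (z := ⟨b, hbX⟩)
      (SimpleGraph.ConnectedComponent.mem_supp_iff _ _ |>.mpr rfl)
      hva hadjab hvb
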